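/- Let A be a real m×n matrix, b ∈ ℝ^m, and assume V = {v ∈ ℝ^n : A v ≥ b} is nonempty and bounded. Let (x^i, c^i), i = 1,…,N, be data with x^i ∈ ℝ^K and c^i ∈ ℝ^n. For ω ∈ ℝ^{n×K} let Λ(ω) = sup{(1/N) Σ_{i=1}^N c^i · v^i : v^i ∈ V*(ω x^i) for each i}. Fix ω̄ ∈ ℝ^{n×K}. Suppose (μ*, δ*, γ*) minimizes Σ_{i=1}^N (b · μ^i + (ω̄ x^i) · δ^i) over all (μ^i, δ^i, γ^i)_{i=1}^N with μ^i ∈ ℝ^m, δ^i ∈ ℝ^n, γ^i ∈ ℝ satisfying A^T μ^i + γ^i (ω̄ x^i) = (1/N) c^i, A δ^i − γ^i b ≥ 0, μ^i ≤ 0 and γ^i ≥ 0 for all i. Suppose further that (μ', ω') minimizes Σ_{i=1}^N (b · μ^i + (ω x^i) · δ*^i) over all (μ^i)_{i=1}^N and ω ∈ ℝ^{n×K} satisfying A^T μ^i + γ*^i (ω x^i) = (1/N) c^i and μ^i ≤ 0 for all i. Then Λ(ω') ≤ Λ(ω̄). -/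

import Mathlib

open Matrix Set BigOperators

noncomputable section

/-- The polyhedron `V = {v : A v ≥ b}` (inequalities entrywise). -/
def polyV {m n : ℕ} (A : Matrix (Fin m) (Fin n) ℝ) (b : Fin m → ℝ) : Set (Fin n → ℝ) :=
  {v | b ≤ A.mulVec v}

/-- `z*(c)`: the optimal (infimum) value of `c · v` over `V`. -/
noncomputable def zstar {m n : ℕ} (A : Matrix (Fin m) (Fin n) ℝ) (b : Fin m → ℝ)
    (c : Fin n → ℝ) : ℝ :=
  sInf ((fun v => c ⬝ᵥ v) '' polyV A b)

/-- `V*(c)`: the set of optimal solutions of `min {c · v : v ∈ V}`. -/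
def Vstar {m n : ℕ} (A : Matrix (Fin m) (Fin n) ℝ) (b : Fin m → ℝ)
    (c : Fin n → ℝ) : Set (Fin n → ℝ) :=
  {v ∈ polyV A b | c ⬝ᵥ v = zstar A b c}

/-- The pessimistic value `Λ(ω)` of the linear model `ω`. -/
noncomputable def pessValue {m n N K : ℕ} (A : Matrix (Fin m) (Fin n) ℝ) (b : Fin m → ℝ)
    (x : Fin N → Fin K → ℝ) (c : Fin N → Fin n → ℝ)
    (ω : Matrix (Fin n) (Fin K) ℝ) : ℝ :=
  sSup {r : ℝ | ∃ v : Fin N → Fin n → ℝ,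
    (∀ i, v i ∈ Vstar A b (ω.mulVec (x i))) ∧
    r = (1 / (N : ℝ)) * ∑ i, c i ⬝ᵥ v i}


lemma farkas {d : ℕ} : ∀ (k : ℕ) (v : Fin k → (Fin d → ℝ)) (b : Fin d → ℝ),
    (∃ y : Fin k → ℝ, (∀ i, 0 ≤ y i) ∧ ∑ i, y i • v i = b) ∨
    (∃ w : Fin d → ℝ, (∀ i, 0 ≤ v i ⬝ᵥ w) ∧ b ⬝ᵥ w < 0) := by
  intro k
  induction k with
  | zero =>
    intro v b
    by_cases hb : b = 0
    · exact Or.inl ⟨0, fun i => le_rfl, by simp [hb]⟩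
    · refine Or.inr ⟨-b, fun i => i.elim0, ?_⟩
      have hnn : 0 ≤ b ⬝ᵥ b := Finset.sum_nonneg fun i _ => mul_self_nonneg (b i)
      have : 0 < b ⬝ᵥ b := by
        rcases hnn.lt_or_eq with h | h
        · exact h
        · exact absurd ((dotProduct_self_eq_zero).mp h.symm) hb
      simpa [dotProduct_neg] using this
  | succ k ih =>
    intro v b
    set u := v (Fin.last k) with hu_def
    set v' : Fin k → (Fin d → ℝ) := fun i => v i.castSucc with hv'_def
    rcases ih v' b with ⟨y, hy, hsum⟩ | ⟨w, hw, hbw⟩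
    · refine Or.inl ⟨Fin.snoc y 0, ?_, ?_⟩
      · intro i
        refine Fin.lastCases ?_ (fun j => ?_) i
        · simp
        · simpa using hy j
      · rw [Fin.sum_univ_castSucc]
        simp [hsum]
        exact hsum
    · by_cases hu : 0 ≤ u ⬝ᵥ w
      · refine Or.inr ⟨w, fun i => ?_, hbw⟩
        refine Fin.lastCases ?_ (fun j => ?_) i
        · exact hu
        · exact hw j
      · push_neg at hu
        have huw : u ⬝ᵥ w ≠ 0 := ne_of_lt hu
        set α : (Fin d → ℝ) → ℝ := fun z => (z ⬝ᵥ w) / (u ⬝ᵥ w) with hα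
        rcases ih (fun i => v' i - α (v' i) • u) (b - α b • u) with ⟨y, hy, hsum⟩ | ⟨w', hw', hb'⟩
        · set lam : ℝ := α b - ∑ i, y i * α (v' i) with hlam
          refine Or.inl ⟨Fin.snoc y lam, ?_, ?_⟩
          · intro i
            refine Fin.lastCases ?_ (fun j => ?_) i
            · rw [Fin.snoc_last]
              have h1 : 0 < α b := div_pos_of_neg_of_neg hbw hu
              have h2 : ∑ i, y i * α (v' i) ≤ 0 := by
                apply Finset.sum_nonpos
                intro i _
                exact mul_nonpos_of_nonneg_of_nonpos (hy i) (div_nonpos_of_nonneg_of_nonpos (hw i) hu.le)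
              rw [hlam]; linarith
            · simpa using hy j
          · rw [Fin.sum_univ_castSucc]
            simp only [Fin.snoc_castSucc, Fin.snoc_last]
            simp only [smul_sub, smul_smul] at hsum
            rw [Finset.sum_sub_distrib, ← Finset.sum_smul, sub_eq_iff_eq_add] at hsum
            rw [hsum, hlam, sub_smul]
            abel
        · refine Or.inr ⟨w' - ((u ⬝ᵥ w') / (u ⬝ᵥ w)) • w, fun i => ?_, ?_⟩
          · have hexp : ∀ z : Fin d → ℝ,
                z ⬝ᵥ (w' - ((u ⬝ᵥ w') / (u ⬝ᵥ w)) • w) = z ⬝ᵥ w' - (u ⬝ᵥ w') / (u ⬝ᵥ w) * (z ⬝ᵥ w) := by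
              intro z
              simp [dotProduct_sub, dotProduct_smul, smul_eq_mul]
            refine Fin.lastCases ?_ (fun j => ?_) i
            · rw [← hu_def, hexp u]
              have : (u ⬝ᵥ w') / (u ⬝ᵥ w) * (u ⬝ᵥ w) = u ⬝ᵥ w' := div_mul_cancel₀ _ huw
              rw [this]; simp
            · have h0 := hw' j
              rw [sub_dotProduct, smul_dotProduct, smul_eq_mul] at h0
              have : (v j.castSucc : Fin d → ℝ) = v' j := rfl
              rw [this, hexp (v' j)]
              have harith : α (v' j) * (u ⬝ᵥ w') = u ⬝ᵥ w' / (u ⬝ᵥ w) * (v' j ⬝ᵥ w) := by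
                rw [hα]; ring
              linarith
          · have h0 := hb'
            rw [sub_dotProduct, smul_dotProduct, smul_eq_mul] at h0
            have hexp : b ⬝ᵥ (w' - ((u ⬝ᵥ w') / (u ⬝ᵥ w)) • w) = b ⬝ᵥ w' - (u ⬝ᵥ w') / (u ⬝ᵥ w) * (b ⬝ᵥ w) := by
              simp [dotProduct_sub, dotProduct_smul, smul_eq_mul]
            rw [hexp]
            have harith : α b * (u ⬝ᵥ w') = u ⬝ᵥ w' / (u ⬝ᵥ w) * (b ⬝ᵥ w) := by
              rw [hα]; ring
            linarith

lemma snoc_dotProduct' {n : ℕ} (a : Fin n → ℝ) (r : ℝ) (w : Fin (n+1) → ℝ) :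
    (Fin.snoc a r : Fin (n+1) → ℝ) ⬝ᵥ w = a ⬝ᵥ (fun i => w i.castSucc) + r * w (Fin.last n) := by
  rw [dotProduct, Fin.sum_univ_castSucc]
  simp [dotProduct]

lemma lp_strong_duality {p n : ℕ} (M : Matrix (Fin p) (Fin n) ℝ) (q : Fin p → ℝ)
    (c : Fin n → ℝ) (x₀ : Fin n → ℝ) (hx₀ : q ≤ M.mulVec x₀)
    (hopt : ∀ x, q ≤ M.mulVec x → c ⬝ᵥ x₀ ≤ c ⬝ᵥ x) :
    ∃ y : Fin p → ℝ, (∀ j, 0 ≤ y j) ∧ Mᵀ.mulVec y = c ∧ c ⬝ᵥ x₀ ≤ q ⬝ᵥ y := by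
  set s : ℝ := c ⬝ᵥ x₀ with hs
  set g : Fin (p+1) → Fin (n+1) → ℝ :=
    Fin.snoc (fun j => Fin.snoc (M j) (q j)) (Fin.snoc (0 : Fin n → ℝ) (-1)) with hg
  set bt : Fin (n+1) → ℝ := Fin.snoc c s with hbt
  rcases farkas (p+1) g bt with ⟨y', hy', hsum⟩ | ⟨w, hgw, hbw⟩
  · -- extract the dual solution
    set y : Fin p → ℝ := fun j => y' j.castSucc with hy
    set β : ℝ := y' (Fin.last p) with hβ
    have hcoord : ∀ l : Fin (n+1), (∑ j : Fin p, y j * g j.castSucc l) + β * g (Fin.last p) l = bt l := by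
      intro l
      have h1 := congrFun hsum l
      rw [Fin.sum_univ_castSucc] at h1
      simpa [Finset.sum_apply] using h1
    refine ⟨y, fun j => hy' _, ?_, ?_⟩
    · funext i
      have h2 := hcoord i.castSucc
      simp only [hg, hbt, Fin.snoc_castSucc, Fin.snoc_last, Pi.zero_apply, mul_zero, add_zero] at h2
      rw [mulVec, dotProduct]
      rw [← h2]
      congr 1; funext j
      simp [transpose_apply, mul_comm]
    · have h2 := hcoord (Fin.last n)
      simp only [hg, hbt, Fin.snoc_castSucc, Fin.snoc_last] at h2
      have hq : q ⬝ᵥ y = ∑ j : Fin p, y j * q j := by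
        rw [dotProduct]; congr 1; funext j; rw [mul_comm]
      have hβ0 : 0 ≤ β := hy' _
      rw [hq]
      nlinarith [h2]
  · -- contradiction with optimality
    exfalso
    set w₀ : Fin n → ℝ := fun i => w i.castSucc with hw₀
    set t : ℝ := w (Fin.last n) with ht
    have hlastrow : 0 ≤ -t := by
      have := hgw (Fin.last p)
      simp only [hg, Fin.snoc_last] at this
      rw [snoc_dotProduct'] at this
      simpa using this
    have hrow : ∀ j : Fin p, 0 ≤ M j ⬝ᵥ w₀ + q j * t := by
      intro j
      have := hgw j.castSucc
      simp only [hg, Fin.snoc_castSucc] at this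
      rwa [snoc_dotProduct'] at this
    have hbw' : c ⬝ᵥ w₀ + s * t < 0 := by
      rw [hbt, snoc_dotProduct'] at hbw
      exact hbw
    rcases eq_or_lt_of_le (neg_nonneg.mp (by linarith) : t ≤ 0) with ht0 | ht0
    · -- t = 0
      have hfeas : q ≤ M.mulVec (x₀ + w₀) := by
        intro j
        rw [mulVec_add]
        have h1 := hx₀ j
        have h2 := hrow j
        rw [ht0] at h2
        simp only [mul_zero, add_zero] at h2
        simp only [Pi.add_apply]
        have : (M.mulVec w₀) j = M j ⬝ᵥ w₀ := rfl
        linarith [h1, h2]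
      have h3 := hopt _ hfeas
      rw [dotProduct_add] at h3
      rw [ht0, mul_zero, add_zero] at hbw'
      have : c ⬝ᵥ x₀ = s := hs.symm
      linarith
    · -- t < 0
      have hmt : 0 < -t := neg_pos.mpr ht0
      have hfeas : q ≤ M.mulVec ((-t)⁻¹ • w₀) := by
        intro j
        rw [mulVec_smul]
        have h2 : q j * (-t) ≤ M j ⬝ᵥ w₀ := by
          have := hrow j; linarith [hrow j]
        have h4 : (-t)⁻¹ * (q j * (-t)) ≤ (-t)⁻¹ * (M j ⬝ᵥ w₀) :=
          mul_le_mul_of_nonneg_left h2 (inv_nonneg.mpr hmt.le)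
        have h5 : (-t)⁻¹ * (q j * (-t)) = q j := by
          field_simp [sub_ne_zero, ht0.ne]
        have h6 : ((-t)⁻¹ • (M.mulVec w₀)) j = (-t)⁻¹ * (M j ⬝ᵥ w₀) := rfl
        rw [h6]
        linarith
      have h3 := hopt _ hfeas
      rw [dotProduct_smul, smul_eq_mul] at h3
      have h7 : c ⬝ᵥ w₀ < s * (-t) := by nlinarith
      have h8 : (-t)⁻¹ * (c ⬝ᵥ w₀) < (-t)⁻¹ * (s * (-t)) :=
        mul_lt_mul_of_pos_left h7 (inv_pos.mpr hmt)
      have h9 : (-t)⁻¹ * (s * (-t)) = s := by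
        field_simp [ht0.ne]
      linarith

lemma continuous_dot {n : ℕ} (u : Fin n → ℝ) : Continuous fun v : Fin n → ℝ => u ⬝ᵥ v := by
  unfold dotProduct
  exact continuous_finset_sum _ fun i _ => continuous_const.mul (continuous_apply i)

lemma isClosed_polyV {m n : ℕ} (A : Matrix (Fin m) (Fin n) ℝ) (b : Fin m → ℝ) :
    IsClosed (polyV A b) := by
  have h : polyV A b = ⋂ j, {v : Fin n → ℝ | b j ≤ A j ⬝ᵥ v} := by
    ext v; simp [polyV, Pi.le_def, mulVec]
  rw [h]
  exact isClosed_iInter fun j => isClosed_le continuous_const (continuous_dot (A j))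

lemma isCompact_polyV {m n : ℕ} (A : Matrix (Fin m) (Fin n) ℝ) (b : Fin m → ℝ)
    (hbd : Bornology.IsBounded (polyV A b)) : IsCompact (polyV A b) :=
  Metric.isCompact_of_isClosed_isBounded (isClosed_polyV A b) hbd

lemma zstar_le {m n : ℕ} (A : Matrix (Fin m) (Fin n) ℝ) (b : Fin m → ℝ)
    (hbd : Bornology.IsBounded (polyV A b)) (u : Fin n → ℝ) {w : Fin n → ℝ}
    (hw : w ∈ polyV A b) : zstar A b u ≤ u ⬝ᵥ w := by
  have hc : IsCompact ((fun v => u ⬝ᵥ v) '' polyV A b) :=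
    (isCompact_polyV A b hbd).image (continuous_dot u)
  exact csInf_le hc.bddBelow ⟨w, hw, rfl⟩

lemma Vstar_nonempty {m n : ℕ} (A : Matrix (Fin m) (Fin n) ℝ) (b : Fin m → ℝ)
    (hne : (polyV A b).Nonempty) (hbd : Bornology.IsBounded (polyV A b)) (u : Fin n → ℝ) :
    (Vstar A b u).Nonempty := by
  have hc : IsCompact ((fun v => u ⬝ᵥ v) '' polyV A b) :=
    (isCompact_polyV A b hbd).image (continuous_dot u)
  have := hc.sInf_mem (hne.image _)
  obtain ⟨v, hv, hveq⟩ := this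
  exact ⟨v, hv, hveq⟩

lemma isCompact_Vstar {m n : ℕ} (A : Matrix (Fin m) (Fin n) ℝ) (b : Fin m → ℝ)
    (hbd : Bornology.IsBounded (polyV A b)) (u : Fin n → ℝ) : IsCompact (Vstar A b u) := by
  have h : Vstar A b u = polyV A b ∩ {v | u ⬝ᵥ v = zstar A b u} := rfl
  rw [h]
  exact (isCompact_polyV A b hbd).inter_right
    (isClosed_eq (continuous_dot u) continuous_const)

lemma recession_trivial {m n : ℕ} (A : Matrix (Fin m) (Fin n) ℝ) (b : Fin m → ℝ)
    (hne : (polyV A b).Nonempty) (hbd : Bornology.IsBounded (polyV A b))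
    {δ : Fin n → ℝ} (hδ : 0 ≤ A.mulVec δ) : δ = 0 := by
  by_contra hδ0
  obtain ⟨v₀, hv₀⟩ := hne
  obtain ⟨R, hR⟩ := Metric.isBounded_iff_subset_closedBall 0 |>.mp hbd
  have hmem : ∀ t : ℝ, 0 ≤ t → v₀ + t • δ ∈ polyV A b := by
    intro t ht
    intro j
    rw [mulVec_add, mulVec_smul]
    have h1 := hv₀ j
    have h2 := hδ j
    have : 0 ≤ t * (A.mulVec δ) j := mul_nonneg ht h2
    simp only [Pi.add_apply, Pi.smul_apply, smul_eq_mul]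
    linarith
  have hnorm : ∀ t : ℝ, 0 ≤ t → ‖v₀ + t • δ‖ ≤ R := by
    intro t ht
    have := hR (hmem t ht)
    simpa [Metric.mem_closedBall, dist_eq_norm] using this
  have hδn : 0 < ‖δ‖ := norm_pos_iff.mpr hδ0
  set t : ℝ := (R + ‖v₀‖ + 1) / ‖δ‖ with htdef
  have hRnn : 0 ≤ R := le_trans (norm_nonneg _) (by simpa using hnorm 0 le_rfl)
  have ht : 0 ≤ t := div_nonneg (by positivity) hδn.le
  have h1 : ‖t • δ‖ - ‖v₀‖ ≤ ‖v₀ + t • δ‖ := by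
    have := norm_add_le (-v₀) (v₀ + t • δ)
    simp only [neg_add_cancel_left] at this
    have h2 : ‖t • δ‖ ≤ ‖v₀‖ + ‖v₀ + t • δ‖ := by simpa [norm_neg] using this
    linarith
  have h3 : ‖t • δ‖ = t * ‖δ‖ := by rw [norm_smul, Real.norm_of_nonneg ht]
  have h4 : t * ‖δ‖ = R + ‖v₀‖ + 1 := div_mul_cancel₀ _ hδn.ne'
  have := hnorm t ht
  rw [h3, h4] at h1
  linarith

lemma weak_duality {m n : ℕ} (A : Matrix (Fin m) (Fin n) ℝ) (b : Fin m → ℝ)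
    (hne : (polyV A b).Nonempty) (hbd : Bornology.IsBounded (polyV A b))
    (u cc : Fin n → ℝ) (μ : Fin m → ℝ) (γ : ℝ) (δ : Fin n → ℝ)
    (heq : Aᵀ.mulVec μ + γ • u = cc) (hμ : μ ≤ 0) (hγ : 0 ≤ γ)
    (hδ : γ • b ≤ A.mulVec δ) {v : Fin n → ℝ} (hv : v ∈ Vstar A b u) :
    cc ⬝ᵥ v ≤ b ⬝ᵥ μ + u ⬝ᵥ δ := by
  obtain ⟨hvV, hvz⟩ := hv
  have h1 : cc ⬝ᵥ v = μ ⬝ᵥ (A.mulVec v) + γ * (u ⬝ᵥ v) := by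
    rw [← heq, add_dotProduct, smul_dotProduct, smul_eq_mul]
    congr 1
    rw [mulVec_transpose, ← dotProduct_mulVec]
  have h2 : μ ⬝ᵥ (A.mulVec v) ≤ μ ⬝ᵥ b := by
    rw [dotProduct, dotProduct]
    apply Finset.sum_le_sum
    intro j _
    exact mul_le_mul_of_nonpos_left (hvV j) (hμ j)
  have h3 : γ * zstar A b u ≤ u ⬝ᵥ δ := by
    rcases hγ.eq_or_lt with hγ0 | hγ0
    · have hrec : δ = 0 := by
        apply recession_trivial A b hne hbd
        intro j
        have := hδ j
        simpa [← hγ0] using this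
      simp [hrec, ← hγ0]
    · have hmem : γ⁻¹ • δ ∈ polyV A b := by
        intro j
        have h4 := hδ j
        simp only [Pi.smul_apply, smul_eq_mul] at h4
        have h5 : γ⁻¹ * (γ * b j) ≤ γ⁻¹ * (A.mulVec δ) j :=
          mul_le_mul_of_nonneg_left h4 (inv_nonneg.mpr hγ0.le)
        have h6 : γ⁻¹ * (γ * b j) = b j := by field_simp
        have h7 : (A.mulVec (γ⁻¹ • δ)) j = γ⁻¹ * (A.mulVec δ) j := by
          rw [mulVec_smul]; rfl
        rw [h7]; linarith
      have h8 := zstar_le A b hbd u hmem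
      rw [dotProduct_smul, smul_eq_mul] at h8
      have h9 : γ * zstar A b u ≤ γ * (γ⁻¹ * (u ⬝ᵥ δ)) :=
        mul_le_mul_of_nonneg_left h8 hγ0.le
      have h10 : γ * (γ⁻¹ * (u ⬝ᵥ δ)) = u ⬝ᵥ δ := by field_simp
      linarith
  have h11 : b ⬝ᵥ μ = μ ⬝ᵥ b := dotProduct_comm _ _
  rw [h1, hvz, h11]
  linarith


lemma exists_dual {m n : ℕ} (A : Matrix (Fin m) (Fin n) ℝ) (b : Fin m → ℝ)
    (hne : (polyV A b).Nonempty) (hbd : Bornology.IsBounded (polyV A b))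
    (u cc : Fin n → ℝ) :
    ∃ (μ : Fin m → ℝ) (γ : ℝ) (δ : Fin n → ℝ) (vh : Fin n → ℝ),
      Aᵀ.mulVec μ + γ • u = cc ∧ γ • b ≤ A.mulVec δ ∧ μ ≤ 0 ∧ 0 ≤ γ ∧
      vh ∈ Vstar A b u ∧ b ⬝ᵥ μ + u ⬝ᵥ δ ≤ cc ⬝ᵥ vh := by
  obtain ⟨vh, hvh, hmax⟩ := (isCompact_Vstar A b hbd u).exists_isMaxOn
    (Vstar_nonempty A b hne hbd u) ((continuous_dot cc).continuousOn)
  set z : ℝ := zstar A b u with hz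
  let M : Matrix (Fin (m+1)) (Fin n) ℝ := Fin.snoc (fun j => A j) (-u)
  let q : Fin (m+1) → ℝ := Fin.snoc b (-z)
  have hMrow : ∀ j : Fin m, (M j.castSucc : Fin n → ℝ) = A j := fun j =>
    Fin.snoc_castSucc (α := fun _ : Fin (m+1) => Fin n → ℝ) (p := fun j => A j) (x := -u) (i := j)
  have hMlast : (M (Fin.last m) : Fin n → ℝ) = -u :=
    Fin.snoc_last (α := fun _ : Fin (m+1) => Fin n → ℝ) (p := fun j => A j) (x := -u)
  have hmv : ∀ (w : Fin n → ℝ) (j : Fin (m+1)), (M.mulVec w) j = M j ⬝ᵥ w := fun _ _ => rfl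
  have hfeasM : ∀ w : Fin n → ℝ, q ≤ M.mulVec w ↔ (w ∈ polyV A b ∧ u ⬝ᵥ w ≤ z) := by
    intro w
    constructor
    · intro h
      constructor
      · intro j
        have := h j.castSucc
        rw [hmv, hMrow] at this
        simp [q] at this
        exact this
      · have := h (Fin.last m)
        rw [hmv, hMlast] at this
        simp only [q, Fin.snoc_last, neg_dotProduct] at this
        linarith
    · rintro ⟨h1, h2⟩ j
      refine Fin.lastCases ?_ (fun j => ?_) j
      · rw [hmv, hMlast]
        simp only [q, Fin.snoc_last, neg_dotProduct]
        linarith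
      · rw [hmv, hMrow]
        simp [q]
        exact h1 j
  have hx₀ : q ≤ M.mulVec vh := by
    rw [hfeasM]
    exact ⟨hvh.1, le_of_eq hvh.2⟩
  have hopt : ∀ w, q ≤ M.mulVec w → (-cc) ⬝ᵥ vh ≤ (-cc) ⬝ᵥ w := by
    intro w hw
    rw [hfeasM] at hw
    have hwV : w ∈ Vstar A b u :=
      ⟨hw.1, le_antisymm hw.2 (zstar_le A b hbd u hw.1)⟩
    have := hmax hwV
    simp only [neg_dotProduct]
    simp only [mem_setOf_eq] at this
    linarith
  obtain ⟨y, hy0, hyeq, hyval⟩ := lp_strong_duality M q (-cc) vh hx₀ hopt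
  refine ⟨-(fun j => y j.castSucc), y (Fin.last m), y (Fin.last m) • vh, vh, ?_, ?_, ?_,
    hy0 _, hvh, ?_⟩
  · funext i
    have h1 := congrFun hyeq i
    rw [mulVec, dotProduct] at h1
    rw [Fin.sum_univ_castSucc] at h1
    simp only [transpose_apply] at h1
    have h2 : ∀ j : Fin m, M j.castSucc i = A j i := fun j => congrFun (hMrow j) i
    have h2' : M (Fin.last m) i = -(u i) := by rw [hMlast]; rfl
    simp only [h2, h2'] at h1
    simp only [Pi.add_apply, Pi.smul_apply, Pi.neg_apply, smul_eq_mul]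
    have h3 : (Aᵀ.mulVec (-(fun j => y j.castSucc))) i
        = -∑ j : Fin m, A j i * y j.castSucc := by
      rw [mulVec, dotProduct, ← Finset.sum_neg_distrib]
      congr 1; funext j
      simp only [transpose_apply, Pi.neg_apply]
      ring
    rw [h3]
    have h4 : (-cc) i = -(cc i) := rfl
    rw [h4] at h1
    linarith
  · intro j
    have h1 : b j ≤ (A.mulVec vh) j := hvh.1 j
    have h5 : y (Fin.last m) * b j ≤ y (Fin.last m) * (A.mulVec vh) j :=
      mul_le_mul_of_nonneg_left h1 (hy0 _)
    simp only [Pi.smul_apply, smul_eq_mul]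
    rw [mulVec_smul]
    simpa using h5
  · intro j
    simp only [Pi.neg_apply, Pi.zero_apply, neg_nonpos]
    exact hy0 _
  · have h1 : q ⬝ᵥ y = b ⬝ᵥ (fun j => y j.castSucc) + (-z) * y (Fin.last m) := by
      rw [dotProduct, Fin.sum_univ_castSucc]
      simp only [q, Fin.snoc_castSucc, Fin.snoc_last]
      rfl
    rw [neg_dotProduct] at hyval
    rw [h1] at hyval
    have h2 : b ⬝ᵥ (-(fun j => y j.castSucc)) = -(b ⬝ᵥ (fun j => y j.castSucc)) := by
      rw [dotProduct_neg]
    have h3 : u ⬝ᵥ (y (Fin.last m) • vh) = y (Fin.last m) * z := by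
      rw [dotProduct_smul, smul_eq_mul, hvh.2]
    rw [h2, h3]
    linarith

lemma sum_in_pess_set {m n N K : ℕ} (A : Matrix (Fin m) (Fin n) ℝ) (b : Fin m → ℝ)
    (x : Fin N → Fin K → ℝ) (c : Fin N → Fin n → ℝ) (ω : Matrix (Fin n) (Fin K) ℝ)
    (v : Fin N → Fin n → ℝ) (hv : ∀ i, v i ∈ Vstar A b (ω.mulVec (x i))) :
    (1 / (N : ℝ)) * ∑ i, c i ⬝ᵥ v i ∈ {r : ℝ | ∃ v : Fin N → Fin n → ℝ,
      (∀ i, v i ∈ Vstar A b (ω.mulVec (x i))) ∧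
      r = (1 / (N : ℝ)) * ∑ i, c i ⬝ᵥ v i} :=
  ⟨v, hv, rfl⟩

lemma pess_set_bddAbove {m n N K : ℕ} (A : Matrix (Fin m) (Fin n) ℝ) (b : Fin m → ℝ)
    (hbd : Bornology.IsBounded (polyV A b))
    (x : Fin N → Fin K → ℝ) (c : Fin N → Fin n → ℝ) (ω : Matrix (Fin n) (Fin K) ℝ) :
    BddAbove {r : ℝ | ∃ v : Fin N → Fin n → ℝ,
      (∀ i, v i ∈ Vstar A b (ω.mulVec (x i))) ∧
      r = (1 / (N : ℝ)) * ∑ i, c i ⬝ᵥ v i} := by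
  set B : Fin N → ℝ := fun i => sSup ((fun v => c i ⬝ᵥ v) '' polyV A b) with hB
  refine ⟨(1 / (N : ℝ)) * ∑ i, B i, ?_⟩
  rintro r ⟨v, hv, rfl⟩
  have hle : ∀ i, c i ⬝ᵥ v i ≤ B i := by
    intro i
    have hcpt : IsCompact ((fun v => c i ⬝ᵥ v) '' polyV A b) :=
      (isCompact_polyV A b hbd).image (continuous_dot (c i))
    exact le_csSup hcpt.bddAbove ⟨v i, (hv i).1, rfl⟩
  have h1 : ∑ i, c i ⬝ᵥ v i ≤ ∑ i, B i := Finset.sum_le_sum fun i _ => hle i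
  have h2 : (0:ℝ) ≤ 1 / (N : ℝ) := by positivity
  exact mul_le_mul_of_nonneg_left h1 h2

lemma pessValue_le {m n N K : ℕ} (A : Matrix (Fin m) (Fin n) ℝ) (b : Fin m → ℝ)
    (hne : (polyV A b).Nonempty) (hbd : Bornology.IsBounded (polyV A b))
    (x : Fin N → Fin K → ℝ) (c : Fin N → Fin n → ℝ) (ω : Matrix (Fin n) (Fin K) ℝ) (t : ℝ)
    (h : ∀ v : Fin N → Fin n → ℝ, (∀ i, v i ∈ Vstar A b (ω.mulVec (x i))) →
      (1 / (N : ℝ)) * ∑ i, c i ⬝ᵥ v i ≤ t) :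
    pessValue A b x c ω ≤ t := by
  apply csSup_le
  · refine ⟨_, sum_in_pess_set A b x c ω
      (fun i => (Vstar_nonempty A b hne hbd (ω.mulVec (x i))).some)
      (fun i => (Vstar_nonempty A b hne hbd (ω.mulVec (x i))).some_mem)⟩
  · rintro r ⟨v, hv, rfl⟩
    exact h v hv

lemma le_pessValue {m n N K : ℕ} (A : Matrix (Fin m) (Fin n) ℝ) (b : Fin m → ℝ)
    (hbd : Bornology.IsBounded (polyV A b))
    (x : Fin N → Fin K → ℝ) (c : Fin N → Fin n → ℝ) (ω : Matrix (Fin n) (Fin K) ℝ)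
    (v : Fin N → Fin n → ℝ) (hv : ∀ i, v i ∈ Vstar A b (ω.mulVec (x i))) :
    (1 / (N : ℝ)) * ∑ i, c i ⬝ᵥ v i ≤ pessValue A b x c ω :=
  le_csSup (pess_set_bddAbove A b hbd x c ω) (sum_in_pess_set A b x c ω v hv)

theorem stmt_3 (m n N K : ℕ)
    (A : Matrix (Fin m) (Fin n) ℝ) (b : Fin m → ℝ)
    (hne : (polyV A b).Nonempty) (hbd : Bornology.IsBounded (polyV A b))
    (x : Fin N → Fin K → ℝ) (c : Fin N → Fin n → ℝ)
    (ωbar : Matrix (Fin n) (Fin K) ℝ)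
    (μs : Fin N → Fin m → ℝ) (δs : Fin N → Fin n → ℝ) (γs : Fin N → ℝ)
    (hfeas : ∀ i, Aᵀ.mulVec (μs i) + γs i • ωbar.mulVec (x i) = (1 / (N : ℝ)) • c i ∧
        γs i • b ≤ A.mulVec (δs i) ∧ μs i ≤ 0 ∧ 0 ≤ γs i)
    (hmin : ∀ (μ : Fin N → Fin m → ℝ) (δ : Fin N → Fin n → ℝ) (γ : Fin N → ℝ),
        (∀ i, Aᵀ.mulVec (μ i) + γ i • ωbar.mulVec (x i) = (1 / (N : ℝ)) • c i ∧
          γ i • b ≤ A.mulVec (δ i) ∧ μ i ≤ 0 ∧ 0 ≤ γ i) →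
        ∑ i, (b ⬝ᵥ μs i + ωbar.mulVec (x i) ⬝ᵥ δs i) ≤
          ∑ i, (b ⬝ᵥ μ i + ωbar.mulVec (x i) ⬝ᵥ δ i))
    (μ' : Fin N → Fin m → ℝ) (ω' : Matrix (Fin n) (Fin K) ℝ)
    (hfeas' : ∀ i, Aᵀ.mulVec (μ' i) + γs i • ω'.mulVec (x i) = (1 / (N : ℝ)) • c i ∧
        μ' i ≤ 0)
    (hmin' : ∀ (μ : Fin N → Fin m → ℝ) (ω : Matrix (Fin n) (Fin K) ℝ),
        (∀ i, Aᵀ.mulVec (μ i) + γs i • ω.mulVec (x i) = (1 / (N : ℝ)) • c i ∧ μ i ≤ 0) →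
        ∑ i, (b ⬝ᵥ μ' i + ω'.mulVec (x i) ⬝ᵥ δs i) ≤
          ∑ i, (b ⬝ᵥ μ i + ω.mulVec (x i) ⬝ᵥ δs i)) :
    pessValue A b x c ω' ≤ pessValue A b x c ωbar := by
  classical
  -- Step 1: weak duality for ω'
  have step1 : pessValue A b x c ω' ≤ ∑ i, (b ⬝ᵥ μ' i + ω'.mulVec (x i) ⬝ᵥ δs i) := by
    apply pessValue_le A b hne hbd x c ω'
    intro v hv
    have hper : ∀ i, (1 / (N : ℝ)) * (c i ⬝ᵥ v i) ≤ b ⬝ᵥ μ' i + ω'.mulVec (x i) ⬝ᵥ δs i := by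
      intro i
      have hw := weak_duality A b hne hbd (ω'.mulVec (x i)) ((1 / (N : ℝ)) • c i)
        (μ' i) (γs i) (δs i) (hfeas' i).1 (hfeas' i).2 (hfeas i).2.2.2 (hfeas i).2.1 (hv i)
      rwa [smul_dotProduct, smul_eq_mul] at hw
    calc (1 / (N : ℝ)) * ∑ i, c i ⬝ᵥ v i = ∑ i, (1 / (N : ℝ)) * (c i ⬝ᵥ v i) :=
          Finset.mul_sum _ _ _
      _ ≤ ∑ i, (b ⬝ᵥ μ' i + ω'.mulVec (x i) ⬝ᵥ δs i) := Finset.sum_le_sum fun i _ => hper i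
  -- Step 2: optimality of (μ', ω') against (μs, ωbar)
  have step2 : ∑ i, (b ⬝ᵥ μ' i + ω'.mulVec (x i) ⬝ᵥ δs i) ≤
      ∑ i, (b ⬝ᵥ μs i + ωbar.mulVec (x i) ⬝ᵥ δs i) :=
    hmin' μs ωbar fun i => ⟨(hfeas i).1, (hfeas i).2.2.1⟩
  -- Step 3: construct an optimal dual solution for ωbar via strong duality
  choose μd γd δd vhd hd1 hd2 hd3 hd4 hd5 hd6 using fun i =>
    exists_dual A b hne hbd (ωbar.mulVec (x i)) ((1 / (N : ℝ)) • c i)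
  have step3 : ∑ i, (b ⬝ᵥ μs i + ωbar.mulVec (x i) ⬝ᵥ δs i) ≤
      ∑ i, (b ⬝ᵥ μd i + ωbar.mulVec (x i) ⬝ᵥ δd i) :=
    hmin μd δd γd fun i => ⟨hd1 i, hd2 i, hd3 i, hd4 i⟩
  -- Step 4: the dual value is below the pessimistic value of ωbar
  have step4 : ∑ i, (b ⬝ᵥ μd i + ωbar.mulVec (x i) ⬝ᵥ δd i) ≤
      (1 / (N : ℝ)) * ∑ i, c i ⬝ᵥ vhd i := by
    have h1 : ∑ i, (b ⬝ᵥ μd i + ωbar.mulVec (x i) ⬝ᵥ δd i) ≤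
        ∑ i, ((1 / (N : ℝ)) • c i) ⬝ᵥ vhd i := Finset.sum_le_sum fun i _ => hd6 i
    have h2 : ∑ i, ((1 / (N : ℝ)) • c i) ⬝ᵥ vhd i = (1 / (N : ℝ)) * ∑ i, c i ⬝ᵥ vhd i := by
      rw [Finset.mul_sum]
      refine Finset.sum_congr rfl fun i _ => ?_
      rw [smul_dotProduct, smul_eq_mul]
    linarith
  have step5 : (1 / (N : ℝ)) * ∑ i, c i ⬝ᵥ vhd i ≤ pessValue A b x c ωbar :=
    le_pessValue A b hbd x c ωbar vhd hd5
  linarith
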